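/- For the system k' = k³ − τ²k − k, τ' = 2τk² (curve shortening in H³ with spatially constant curvature and torsion), if k(0)² = 1 and τ(0) > 0, then k(t)² → 0 and τ(t)² → the positive root of 1 + τ(0)·x − x² = 0 squared, as t → ∞; in particular k(t) → 0. -/

import Mathlib

open Filter Set

/-- Grönwall with zero initial condition: the function vanishes. -/
lemma gronwall_zero_aux {f f' : ℝ → ℝ} {b C : ℝ}
    (hf : ContinuousOn f (Icc 0 b))
    (hf' : ∀ x ∈ Ico 0 b, HasDerivWithinAt f (f' x) (Ici x) x)
    (h0 : f 0 = 0)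
    (bound : ∀ x ∈ Ico 0 b, ‖f' x‖ ≤ C * ‖f x‖) :
    ∀ x ∈ Icc 0 b, f x = 0 := by
  intro x hx
  have h := norm_le_gronwallBound_of_norm_deriv_right_le (f' := f') (δ := 0) (K := C) (ε := 0)
    hf hf' (by simp [h0]) (fun y hy => by simpa using bound y hy) x hx
  rw [gronwallBound_ε0_δ0] at h
  have := norm_nonneg (f x)
  have : ‖f x‖ = 0 := le_antisymm h (norm_nonneg _)
  simpa using this

theorem H3_constant_curvature_torsion (k τ : ℝ → ℝ)
    (hk : ∀ t, 0 ≤ t → HasDerivAt k ((k t) ^ 3 - (τ t) ^ 2 * k t - k t) t)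
    (hτ : ∀ t, 0 ≤ t → HasDerivAt τ (2 * τ t * (k t) ^ 2) t)
    (hk0 : (k 0) ^ 2 = 1) (hτ0 : 0 < τ 0) :
    Tendsto (fun t => (k t) ^ 2) atTop (nhds 0) ∧
    Tendsto (fun t => (τ t) ^ 2) atTop
      (nhds (((τ 0 + Real.sqrt ((τ 0) ^ 2 + 4)) / 2) ^ 2)) ∧
    Tendsto k atTop (nhds 0) := by
  -- continuity facts
  have hkc : ∀ t, 0 ≤ t → ContinuousAt k t := fun t ht => (hk t ht).continuousAt
  have hτc : ∀ t, 0 ≤ t → ContinuousAt τ t := fun t ht => (hτ t ht).continuousAt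
  have hkcI : ∀ b : ℝ, ContinuousOn k (Icc 0 b) :=
    fun b t ht => (hkc t ht.1).continuousWithinAt
  have hτcI : ∀ b : ℝ, ContinuousOn τ (Icc 0 b) :=
    fun b t ht => (hτc t ht.1).continuousWithinAt
  -- bound for 2 k ^ 2 on compacts
  have hbound : ∀ b : ℝ, ∃ C : ℝ, ∀ t ∈ Icc (0:ℝ) b, 2 * (k t) ^ 2 ≤ C := by
    intro b
    obtain ⟨C, hC⟩ := isCompact_Icc.exists_bound_of_continuousOn
      (f := fun t => 2 * (k t) ^ 2) (by
        intro t ht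
        exact ((hkc t ht.1).continuousWithinAt.pow 2).const_smul (2:ℝ))
    exact ⟨C, fun t ht => (le_abs_self _).trans (hC t ht)⟩
  -- positivity of τ
  have hτpos : ∀ t, 0 ≤ t → 0 < τ t := by
    intro c hc
    by_contra hcon
    push_neg at hcon
    -- there is a zero of τ in [0, c]
    have hzero : ∃ c₀ ∈ Icc (0:ℝ) c, τ c₀ = 0 := by
      have h0 : (0:ℝ) ∈ Icc (τ c) (τ 0) := ⟨hcon, hτ0.le⟩
      obtain ⟨c₀, hc₀, hτc₀⟩ := intermediate_value_Icc' hc (hτcI c) h0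
      exact ⟨c₀, hc₀, hτc₀⟩
    obtain ⟨c₀, hc₀, hτc₀⟩ := hzero
    -- reverse time: g t = τ (c₀ - t)
    set g : ℝ → ℝ := fun t => τ (c₀ - t) with hg
    obtain ⟨C, hC⟩ := hbound c₀
    have hmem : ∀ t ∈ Icc (0:ℝ) c₀, c₀ - t ∈ Icc (0:ℝ) c₀ := by
      intro t ht; constructor <;> [linarith [ht.2]; linarith [ht.1]]
    have hgc : ContinuousOn g (Icc 0 c₀) := by
      intro t ht
      exact ((hτc _ (hmem t ht).1).comp_continuousWithinAt
        ((continuous_const.sub continuous_id).continuousWithinAt))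
    have hgd : ∀ t ∈ Ico (0:ℝ) c₀,
        HasDerivWithinAt g (-(2 * τ (c₀ - t) * (k (c₀ - t)) ^ 2)) (Ici t) t := by
      intro t ht
      have h1 : HasDerivAt (fun t : ℝ => c₀ - t) (-1) t := by
        simpa using (hasDerivAt_id t).const_sub c₀
      have h2 := (hτ (c₀ - t) (by linarith [ht.2])).comp t h1
      exact h2.hasDerivWithinAt.congr_deriv (by ring)
    have habs : ∀ t ∈ Ico (0:ℝ) c₀,
        ‖-(2 * τ (c₀ - t) * (k (c₀ - t)) ^ 2)‖ ≤ C * ‖g t‖ := by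
      intro t ht
      have hmem' : c₀ - t ∈ Icc (0:ℝ) c₀ := hmem t ⟨ht.1, ht.2.le⟩
      have hCk := hC _ hmem'
      have hknn : (0:ℝ) ≤ 2 * (k (c₀ - t))^2 := by positivity
      calc ‖-(2 * τ (c₀ - t) * (k (c₀ - t)) ^ 2)‖
          = (2 * (k (c₀ - t))^2) * ‖τ (c₀ - t)‖ := by
            rw [norm_neg]
            rw [show 2 * τ (c₀ - t) * (k (c₀ - t)) ^ 2
              = (2 * (k (c₀ - t))^2) * τ (c₀ - t) by ring]
            rw [norm_mul, Real.norm_of_nonneg hknn]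
        _ ≤ C * ‖g t‖ := by
            apply mul_le_mul_of_nonneg_right hCk (norm_nonneg _)
    have hg0 : g 0 = 0 := by simpa [hg] using hτc₀
    have := gronwall_zero_aux hgc hgd hg0 habs c₀ ⟨hc₀.1, le_refl _⟩
    have : τ 0 = 0 := by simpa [hg] using this
    linarith
  -- τ is monotone on Ici 0
  have hmono : MonotoneOn τ (Ici 0) := by
    apply monotoneOn_of_deriv_nonneg (convex_Ici 0)
    · intro t ht; exact (hτc t ht).continuousWithinAt
    · intro t ht
      rw [interior_Ici] at ht
      exact ((hτ t (le_of_lt ht)).differentiableAt).differentiableWithinAt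
    · intro t ht
      rw [interior_Ici] at ht
      rw [(hτ t (le_of_lt ht)).deriv]
      have := hτpos t (le_of_lt ht)
      positivity
  have hτge : ∀ t, 0 ≤ t → τ 0 ≤ τ t := fun t ht =>
    hmono (Set.mem_Ici.2 le_rfl) ht ht
  -- the invariant I = τ² + k² - 1 - τ0·τ vanishes
  have hinv : ∀ t, 0 ≤ t → (τ t) ^ 2 + (k t) ^ 2 - 1 - τ 0 * τ t = 0 := by
    intro t ht
    set I : ℝ → ℝ := fun s => (τ s) ^ 2 + (k s) ^ 2 - 1 - τ 0 * τ s with hI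
    obtain ⟨C, hC⟩ := hbound t
    have hIc : ContinuousOn I (Icc 0 t) := by
      intro s hs
      have h1 := (hτc s hs.1).continuousWithinAt (s := Icc (0:ℝ) t)
      have h2 := (hkc s hs.1).continuousWithinAt (s := Icc (0:ℝ) t)
      exact (((h1.pow 2).add (h2.pow 2)).sub continuousWithinAt_const).sub
        (continuousWithinAt_const.mul h1)
    have hId : ∀ s ∈ Ico (0:ℝ) t,
        HasDerivWithinAt I (2 * (k s)^2 * I s) (Ici s) s := by
      intro s hs
      have h1 := ((hτ s hs.1).pow 2).add ((hk s hs.1).pow 2)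
      have h2 := (h1.sub_const 1).sub ((hτ s hs.1).const_mul (τ 0))
      have h3 := h2.hasDerivWithinAt (s := Ici s)
      convert h3 using 1
      show 2 * (k s)^2 * I s = _
      simp only [hI]
      push_cast
      ring
      all_goals rfl
    have hIb : ∀ s ∈ Ico (0:ℝ) t, ‖2 * (k s)^2 * I s‖ ≤ C * ‖I s‖ := by
      intro s hs
      rw [norm_mul]
      apply mul_le_mul_of_nonneg_right _ (norm_nonneg _)
      rw [Real.norm_of_nonneg (by positivity)]
      exact hC s ⟨hs.1, hs.2.le⟩
    have hI0 : I 0 = 0 := by simp [hI, hk0]; ring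
    exact gronwall_zero_aux hIc hId hI0 hIb t ⟨ht, le_refl _⟩
  -- k² ≤ 1 on [0,∞)
  have hu1 : ∀ t, 0 ≤ t → (k t) ^ 2 ≤ 1 := by
    intro t ht
    have h1 := hinv t ht
    have h2 := hτge t ht
    have h3 := hτpos t ht
    nlinarith
  -- exponential decay of k²
  have hdecay : ∀ t, 0 ≤ t → (k t) ^ 2 ≤ Real.exp (-(2 * τ 0 ^ 2) * t) := by
    intro t ht
    set G : ℝ → ℝ := fun s => (k s) ^ 2 * Real.exp (2 * τ 0 ^ 2 * s) with hG
    have hGd : ∀ s, 0 ≤ s → HasDerivAt G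
        ((2 * k s * ((k s) ^ 3 - (τ s)^2 * k s - k s) + (k s)^2 * (2 * τ 0 ^2))
          * Real.exp (2 * τ 0 ^ 2 * s)) s := by
      intro s hs
      have h1 : HasDerivAt (fun s => (k s) ^ 2) (2 * k s * ((k s) ^ 3 - (τ s)^2 * k s - k s)) s := by
        have := (hk s hs).pow 2
        exact this.congr_deriv (by ring)
      have h2 : HasDerivAt (fun s : ℝ => Real.exp (2 * τ 0 ^ 2 * s))
          (Real.exp (2 * τ 0 ^ 2 * s) * (2 * τ 0 ^ 2)) s := by
        have h := ((hasDerivAt_id s).const_mul (2 * τ 0 ^ 2)).exp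
        simpa [mul_comm] using h
      have := h1.mul h2
      exact this.congr_deriv (by ring)
    have hanti : AntitoneOn G (Ici 0) := by
      apply antitoneOn_of_deriv_nonpos (convex_Ici 0)
      · intro s hs
        have h1 := (hkc s hs).continuousWithinAt (s := Ici (0:ℝ))
        exact (h1.pow 2).mul (Real.continuous_exp.comp (continuous_const.mul continuous_id)).continuousWithinAt
      · intro s hs
        rw [interior_Ici] at hs
        exact ((hGd s hs.le).differentiableAt).differentiableWithinAt
      · intro s hs
        rw [interior_Ici] at hs
        rw [(hGd s hs.le).deriv]
        have hτs := hτpos s hs.le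
        have hτges := hτge s hs.le
        have hus := hu1 s hs.le
        have hinvs := hinv s hs.le
        have hexp : (0:ℝ) < Real.exp (2 * τ 0 ^ 2 * s) := Real.exp_pos _
        have key : 2 * k s * ((k s) ^ 3 - (τ s)^2 * k s - k s) + (k s)^2 * (2 * τ 0 ^2) ≤ 0 := by
          have e1 : (k s)^2 * ((τ s) ^ 2 + (k s) ^ 2 - 1 - τ 0 * τ s) = 0 := by
            rw [hinvs, mul_zero]
          have e2 : (0:ℝ) ≤ (k s)^2 * (1 - (k s)^2) :=
            mul_nonneg (sq_nonneg _) (by linarith)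
          have e3 : (0:ℝ) ≤ τ 0 * (k s)^2 * (τ s - τ 0) :=
            mul_nonneg (mul_nonneg hτ0.le (sq_nonneg _)) (by linarith)
          nlinarith [e1, e2, e3]
        exact mul_nonpos_of_nonpos_of_nonneg key hexp.le
    have hG1 : G t ≤ G 0 := hanti (Set.mem_Ici.2 le_rfl) ht ht
    have hG0 : G 0 = 1 := by simp [hG, hk0]
    rw [hG0] at hG1
    have hexp : (0:ℝ) < Real.exp (2 * τ 0 ^ 2 * t) := Real.exp_pos _
    have h2 : (k t)^2 ≤ 1 / Real.exp (2 * τ 0 ^ 2 * t) :=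
      (le_div_iff₀ hexp).2 (by simpa [hG] using hG1)
    calc (k t)^2 ≤ 1 / Real.exp (2 * τ 0 ^ 2 * t) := h2
      _ = Real.exp (-(2 * τ 0 ^ 2) * t) := by
          rw [show -(2 * τ 0 ^ 2) * t = -(2 * τ 0 ^ 2 * t) by ring, Real.exp_neg,
            one_div]
  -- limit of k²
  have hexp_tendsto : Tendsto (fun t : ℝ => Real.exp (-(2 * τ 0 ^ 2) * t)) atTop (nhds 0) := by
    have h1 : Tendsto (fun t : ℝ => 2 * τ 0 ^ 2 * t) atTop atTop :=
      Tendsto.const_mul_atTop (by positivity) tendsto_id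
    have h2 := Real.tendsto_exp_neg_atTop_nhds_zero.comp h1
    refine h2.congr fun t => ?_
    simp [Function.comp_def, neg_mul]
  have hk2 : Tendsto (fun t => (k t) ^ 2) atTop (nhds 0) := by
    apply tendsto_of_tendsto_of_tendsto_of_le_of_le' tendsto_const_nhds hexp_tendsto
    · filter_upwards with t using sq_nonneg _
    · filter_upwards [eventually_ge_atTop (0:ℝ)] with t ht using hdecay t ht
  -- limit of k
  have hkabs : Tendsto (fun t => |k t|) atTop (nhds 0) := by
    have h := (Real.continuous_sqrt.tendsto 0).comp hk2
    simp only [Function.comp_def, Real.sqrt_sq_eq_abs, Real.sqrt_zero] at h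
    exact h
  have hklim : Tendsto k atTop (nhds 0) := by
    have hneg := hkabs.neg
    rw [neg_zero] at hneg
    apply tendsto_of_tendsto_of_tendsto_of_le_of_le' hneg hkabs
    · filter_upwards with t using neg_abs_le _
    · filter_upwards with t using le_abs_self _
  -- limit of τ
  set s0 : ℝ := Real.sqrt ((τ 0) ^ 2 + 4) with hs0
  set L : ℝ := (τ 0 + s0) / 2 with hL
  have hs0sq : s0 ^ 2 = (τ 0) ^ 2 + 4 := Real.sq_sqrt (by positivity)
  have hs0pos : 0 < s0 := Real.sqrt_pos.2 (by positivity)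
  have hLpos : 0 < L := by rw [hL]; positivity
  have hτL : ∀ t, 0 ≤ t → |τ t - L| ≤ (k t) ^ 2 / L := by
    intro t ht
    have h1 := hinv t ht
    have h2 := hτge t ht
    have h3 := hτpos t ht
    -- (τ t - L) * (τ t - L') = -(k t)^2 with L' = (τ 0 - s0)/2
    have hfac : (τ t - L) * (τ t - (τ 0 - s0) / 2) = -(k t) ^ 2 := by
      rw [hL]; nlinarith [hs0sq]
    have hge : L ≤ τ t - (τ 0 - s0) / 2 := by
      rw [hL]; nlinarith
    have hL' : 0 < τ t - (τ 0 - s0) / 2 := lt_of_lt_of_le hLpos hge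
    have habs : |τ t - L| * (τ t - (τ 0 - s0) / 2) = (k t) ^ 2 := by
      have hcongr := congrArg abs hfac
      rwa [abs_mul, abs_of_pos hL', abs_neg, abs_of_nonneg (sq_nonneg (k t))] at hcongr
    have hmul : |τ t - L| * L ≤ (k t) ^ 2 := by
      calc |τ t - L| * L ≤ |τ t - L| * (τ t - (τ 0 - s0) / 2) :=
            mul_le_mul_of_nonneg_left hge (abs_nonneg _)
        _ = (k t) ^ 2 := habs
    exact (le_div_iff₀ hLpos).2 hmul
  have hτlim : Tendsto τ atTop (nhds L) := by
    have hup : Tendsto (fun t => L + (k t) ^ 2 / L) atTop (nhds (L + 0 / L)) :=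
      tendsto_const_nhds.add (hk2.div_const L)
    have hdown : Tendsto (fun t => L - (k t) ^ 2 / L) atTop (nhds (L - 0 / L)) :=
      tendsto_const_nhds.sub (hk2.div_const L)
    rw [show L + 0 / L = L by simp] at hup
    rw [show L - 0 / L = L by simp] at hdown
    apply tendsto_of_tendsto_of_tendsto_of_le_of_le' hdown hup
    · filter_upwards [eventually_ge_atTop (0:ℝ)] with t ht
      have := hτL t ht
      rw [abs_le] at this
      linarith [this.1]
    · filter_upwards [eventually_ge_atTop (0:ℝ)] with t ht
      have := hτL t ht
      rw [abs_le] at this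
      linarith [this.2]
  refine ⟨hk2, ?_, hklim⟩
  have := hτlim.pow 2
  simpa [hL, hs0] using this
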